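/- Let λ ⊆ [n] with |λ| = k. The maps u ↦ f_u = u·t_k·w_λ^{-1} and f ↦ u_f = f·w_λ·t_k^{-1} are mutually inverse bijections between {u ∈ S_n : u ≤_k w_λ} and {f ∈ CB(k,n) : Λ(f) = λ}, where t_k is the translation element [1+n,…,k+n,k+1,…,n]. -/

import Mathlib

/-- The `k`-Bruhat order on `Sₙ` (positions `0,…,n-1` stand for `1,…,n`). -/
def kBruhat (n k : ℕ) (u v : Equiv.Perm (Fin n)) : Prop :=
  (∀ i : Fin n, (i : ℕ) < k → u i ≤ v i) ∧
  (∀ j : Fin n, k ≤ (j : ℕ) → v j ≤ u j) ∧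
  (∀ i j : Fin n, i < j → ((j : ℕ) < k ∨ k ≤ (i : ℕ)) → u i < u j → v i < v j)

/-- `w` is `k`-Grassmannian. -/
def Grassmannian (n k : ℕ) (w : Equiv.Perm (Fin n)) : Prop :=
  (∀ i j : Fin n, i < j → (j : ℕ) < k → w i < w j) ∧
  (∀ i j : Fin n, i < j → k ≤ (i : ℕ) → w i < w j)

/-- `f` is a bounded affine permutation of period `n` with `av f = k`,
i.e. an element of `CB(k,n)`. -/
def CBmem (n k : ℕ) (f : ℤ → ℤ) : Prop :=
  Function.Bijective f ∧ (∀ i : ℤ, f (i + n) = f i + n) ∧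
  (∀ i : ℤ, i ≤ f i ∧ f i ≤ i + n) ∧
  ∑ i ∈ Finset.Icc (1 : ℤ) (n : ℤ), (f i - i) = (n : ℤ) * k

/-- The defining relation `f = f_u = u·t_k·w⁻¹`, equivalently `u = u_f = f·w·t_k⁻¹`:
`f(w(i)) = u(i) + n` on the first block and `f(w(i)) = u(i)` on the second. -/
def rel (n k : ℕ) (w u : Equiv.Perm (Fin n)) (f : ℤ → ℤ) : Prop :=
  ∀ i : Fin n,
    f (((w i : ℕ) : ℤ) + 1) = ((u i : ℕ) : ℤ) + 1 + if (i : ℕ) < k then (n : ℤ) else 0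

namespace FuUfAux

lemma res_lt (n : ℕ) (hn : 0 < n) (x : ℤ) : ((x-1) % (n:ℤ)).toNat < n := by
  have h1 : (0:ℤ) < n := by exact_mod_cast hn
  have h2 := Int.emod_lt_of_pos (x-1) h1
  have h3 := Int.emod_nonneg (x-1) (by omega : (n:ℤ) ≠ 0)
  omega

/-- residue index of `x` (so `x = res x + 1 + n * ((x-1)/n)`). -/
def res (n : ℕ) (hn : 0 < n) (x : ℤ) : Fin n := ⟨((x-1) % (n:ℤ)).toNat, res_lt n hn x⟩

/-- the affine permutation `f_u = u · t_k · w⁻¹`. -/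
def Fmap (n k : ℕ) (hn : 0 < n) (w u : Equiv.Perm (Fin n)) (x : ℤ) : ℤ :=
  ((u (w.symm (res n hn x)) : ℕ) : ℤ) + 1
    + (if ((w.symm (res n hn x) : Fin n) : ℕ) < k then (n:ℤ) else 0)
    + (n:ℤ) * ((x-1) / n)

lemma res_spec (n : ℕ) (hn : 0 < n) (r : Fin n) (q : ℤ) :
    res n hn ((r:ℤ) + 1 + n*q) = r ∧ (((r:ℤ) + 1 + n*q) - 1) / n = q := by
  have hnz : (n:ℤ) ≠ 0 := by exact_mod_cast hn.ne'
  have hr0 : (0:ℤ) ≤ (r:ℤ) := by positivity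
  have hrn : (r:ℤ) < n := by exact_mod_cast r.isLt
  have he : ((r:ℤ) + 1 + n*q) - 1 = (r:ℤ) + (n:ℤ)*q := by ring
  constructor
  · apply Fin.ext
    simp only [res, he]
    rw [Int.add_mul_emod_self_left, Int.emod_eq_of_lt hr0 hrn]
    simp
  · rw [he, Int.add_mul_ediv_left _ _ hnz, Int.ediv_eq_zero_of_lt hr0 hrn, zero_add]

lemma Fmap_val (n k : ℕ) (hn : 0 < n) (w u : Equiv.Perm (Fin n)) (r : Fin n) (q : ℤ) :
    Fmap n k hn w u ((r:ℤ) + 1 + n*q)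
      = ((u (w.symm r) : ℕ) : ℤ) + 1
        + (if ((w.symm r : Fin n) : ℕ) < k then (n:ℤ) else 0) + (n:ℤ) * q := by
  obtain ⟨h1, h2⟩ := res_spec n hn r q
  simp only [Fmap, h1, h2]

lemma decomp (n : ℕ) (hn : 0 < n) (x : ℤ) :
    x = ((res n hn x : ℕ) : ℤ) + 1 + n * ((x-1)/n) := by
  have h := Int.emod_add_mul_ediv (x-1) (n:ℤ)
  have h3 := Int.emod_nonneg (x-1) (by exact_mod_cast hn.ne' : (n:ℤ) ≠ 0)
  simp only [res]
  omega

lemma ext_periodic (n : ℕ) (g : ℤ → ℤ) (hg : ∀ x, g (x + n) = g x + n) :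
    ∀ (q : ℤ) (x : ℤ), g (x + n*q) = g x + n*q := by
  intro q
  induction q using Int.induction_on with
  | zero => simp
  | succ q ih =>
    intro x
    have h1 : x + (n:ℤ)*(q+1) = (x + n*q) + n := by ring
    rw [h1, hg, ih]; ring
  | pred q ih =>
    intro x
    have h1 : x + (n:ℤ)*(-q-1) = (x + n*(-q)) - n := by push_cast; ring
    have h2 := hg ((x + (n:ℤ)*(-q)) - n)
    have h3 : (x + (n:ℤ)*(-q)) - n + n = x + n*(-q) := by ring
    rw [h3] at h2
    rw [h1]
    have h4 := ih x
    push_cast at h4 ⊢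
    linarith

lemma cancel (n a b q p : ℤ) (hn : 0 < n) (ha : 0 ≤ a) (han : a < n) (hb : 0 ≤ b)
    (hbn : b < n) (h : a + n*q = b + n*p) : a = b ∧ q = p := by
  have hd : a - b = n*(p - q) := by linarith
  have hpq : p - q = 0 := by
    rcases lt_trichotomy (p - q) 0 with h' | h' | h'
    · have h1 : n * (p - q) ≤ n * (-1) := by
        apply mul_le_mul_of_nonneg_left (by omega) hn.le
      linarith
    · exact h'
    · have h1 : n * 1 ≤ n * (p - q) := by
        apply mul_le_mul_of_nonneg_left (by omega) hn.le
      linarith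
  refine ⟨?_, by omega⟩
  rw [hpq, mul_zero] at hd
  omega

end FuUfAux

open FuUfAux in
/-- For a `k`-subset `λ ⊆ [n]` with Grassmannian permutation `w = w_λ`, the maps
`u ↦ f_u = u·t_k·w_λ⁻¹` and `f ↦ u_f = f·w_λ·t_k⁻¹` are mutually inverse
bijections between `{u : u ≤ₖ w_λ}` and `{f ∈ CB(k,n) : Λ(f) = λ}`. -/
theorem fu_uf_bijections (n k : ℕ) (hn : 1 ≤ n) (hk : k ≤ n)
    (w : Equiv.Perm (Fin n)) (L : Finset (Fin n)) (hL : L.card = k)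
    (hw : Grassmannian n k w)
    (hwL : (Finset.univ.filter (fun i : Fin n => (i : ℕ) < k)).image w = L) :
    (∀ u : Equiv.Perm (Fin n), kBruhat n k u w →
      ∃! f : ℤ → ℤ, (CBmem n k f ∧
        (∀ i : Fin n, ((n : ℤ) < f (((i : ℕ) : ℤ) + 1) ↔ i ∈ L))) ∧ rel n k w u f) ∧
    (∀ f : ℤ → ℤ, CBmem n k f →
      (∀ i : Fin n, ((n : ℤ) < f (((i : ℕ) : ℤ) + 1) ↔ i ∈ L)) →
      ∃! u : Equiv.Perm (Fin n), kBruhat n k u w ∧ rel n k w u f) := by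
  have hn0 : 0 < n := hn
  have hmem : ∀ r : Fin n, r ∈ L ↔ ((w.symm r : Fin n) : ℕ) < k := by
    intro r
    rw [← hwL]
    simp only [Finset.mem_image, Finset.mem_filter, Finset.mem_univ, true_and]
    constructor
    · rintro ⟨i, hi, rfl⟩
      simpa using hi
    · intro h
      exact ⟨w.symm r, h, w.apply_symm_apply r⟩
  have hmemw : ∀ i : Fin n, w i ∈ L ↔ (i : ℕ) < k := by
    intro i
    rw [hmem (w i), Equiv.symm_apply_apply]
  constructor
  · -- forward direction
    intro u hu
    obtain ⟨hu1, hu2, _⟩ := hu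
    refine ⟨Fmap n k hn0 w u, ⟨⟨?_, ?_⟩, ?_⟩, ?_⟩
    · -- CBmem
      refine ⟨⟨?_, ?_⟩, ?_, ?_, ?_⟩
      · -- injective
        intro x y hxy
        have dx := decomp n hn0 x
        have dy := decomp n hn0 y
        set r := res n hn0 x with hr
        set s := res n hn0 y with hs
        set q := (x-1)/(n:ℤ) with hq
        set p := (y-1)/(n:ℤ) with hp
        rw [dx, dy, Fmap_val, Fmap_val] at hxy
        have har : ((u (w.symm r) : ℕ) : ℤ) < n := by exact_mod_cast (u (w.symm r)).isLt
        have has : ((u (w.symm s) : ℕ) : ℤ) < n := by exact_mod_cast (u (w.symm s)).isLt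
        have har0 : (0:ℤ) ≤ ((u (w.symm r) : ℕ) : ℤ) := by positivity
        have has0 : (0:ℤ) ≤ ((u (w.symm s) : ℕ) : ℤ) := by positivity
        have hres : r = s ∧ q = p := by
          by_cases h1 : ((w.symm r : Fin n) : ℕ) < k <;>
            by_cases h2 : ((w.symm s : Fin n) : ℕ) < k <;>
              simp only [if_pos, if_neg, h1, h2, if_true, if_false] at hxy
          · have := cancel (n:ℤ) _ _ (q+1) (p+1) (by exact_mod_cast hn0) har0 har has0 has
              (by linarith)
            have hab : u (w.symm r) = u (w.symm s) := Fin.ext (by exact_mod_cast this.1)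
            exact ⟨w.symm.injective (u.injective hab), by omega⟩
          · have := cancel (n:ℤ) _ _ (q+1) p (by exact_mod_cast hn0) har0 har has0 has
              (by linarith)
            have hab : u (w.symm r) = u (w.symm s) := Fin.ext (by exact_mod_cast this.1)
            have : r = s := w.symm.injective (u.injective hab)
            rw [this] at h1
            exact absurd h1 h2
          · have := cancel (n:ℤ) _ _ q (p+1) (by exact_mod_cast hn0) har0 har has0 has
              (by linarith)
            have hab : u (w.symm r) = u (w.symm s) := Fin.ext (by exact_mod_cast this.1)
            have : r = s := w.symm.injective (u.injective hab)
            rw [this] at h1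
            exact absurd h2 h1
          · have := cancel (n:ℤ) _ _ q p (by exact_mod_cast hn0) har0 har has0 has
              (by linarith)
            have hab : u (w.symm r) = u (w.symm s) := Fin.ext (by exact_mod_cast this.1)
            exact ⟨w.symm.injective (u.injective hab), this.2⟩
        rw [dx, dy, hres.1, hres.2]
      · -- surjective
        intro y
        have dy := decomp n hn0 y
        set s := res n hn0 y with hs
        set p := (y-1)/(n:ℤ) with hp
        by_cases hik : ((u.symm s : Fin n) : ℕ) < k
        · refine ⟨((w (u.symm s) : ℕ) : ℤ) + 1 + n*(p-1), ?_⟩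
          rw [Fmap_val]
          simp only [Equiv.symm_apply_apply, if_pos hik, Equiv.apply_symm_apply]
          rw [dy]; ring
        · refine ⟨((w (u.symm s) : ℕ) : ℤ) + 1 + n*p, ?_⟩
          rw [Fmap_val]
          simp only [Equiv.symm_apply_apply, if_neg hik, Equiv.apply_symm_apply]
          rw [dy]; ring
      · -- periodicity
        intro x
        have dx := decomp n hn0 x
        set r := res n hn0 x with hr
        set q := (x-1)/(n:ℤ) with hq
        have h1 : x + (n:ℤ) = (r:ℤ) + 1 + (n:ℤ)*(q+1) := by rw [dx]; push_cast; ring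
        rw [h1, Fmap_val]
        conv_rhs => rw [dx, Fmap_val]
        ring
      · -- bounds
        intro x
        have dx := decomp n hn0 x
        set r := res n hn0 x with hr
        set q := (x-1)/(n:ℤ) with hq
        rw [dx, Fmap_val]
        have hwr : ((w (w.symm r) : Fin n) : ℕ) = (r : ℕ) := by
          rw [Equiv.apply_symm_apply]
        have hun : ((u (w.symm r) : Fin n) : ℕ) < n := (u (w.symm r)).isLt
        have hrn : ((r : Fin n) : ℕ) < n := r.isLt
        by_cases h : ((w.symm r : Fin n) : ℕ) < k
        · have h1 : ((u (w.symm r) : Fin n) : ℕ) ≤ ((w (w.symm r) : Fin n) : ℕ) := hu1 _ h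
          rw [hwr] at h1
          simp only [if_pos h]
          omega
        · have h1 : ((w (w.symm r) : Fin n) : ℕ) ≤ ((u (w.symm r) : Fin n) : ℕ) :=
            hu2 _ (le_of_not_gt h)
          rw [hwr] at h1
          simp only [if_neg h]
          omega
      · -- sum
        have hstep : ∑ x ∈ Finset.Icc (1:ℤ) (n:ℤ), (Fmap n k hn0 w u x - x)
            = ∑ r : Fin n, (((u (w.symm r) : ℕ) : ℤ) + 1
                + (if ((w.symm r : Fin n) : ℕ) < k then (n:ℤ) else 0) - ((r:ℤ) + 1)) := by
          refine Finset.sum_nbij' (res n hn0) (fun r => (r:ℤ) + 1) ?_ ?_ ?_ ?_ ?_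
          · intro a _; exact Finset.mem_univ _
          · intro r _
            simp only [Finset.mem_Icc]
            have := r.isLt
            omega
          · intro a ha
            simp only [Finset.mem_Icc] at ha
            have hq0 : (a - 1) / (n:ℤ) = 0 := by
              apply Int.ediv_eq_zero_of_lt <;> omega
            have hd := decomp n hn0 a
            rw [hq0, mul_zero, add_zero] at hd
            show ((res n hn0 a : ℕ) : ℤ) + 1 = a
            omega
          · intro r _
            have := res_spec n hn0 r 0
            simpa using this.1
          · intro a ha
            simp only [Finset.mem_Icc] at ha
            have hq0 : (a - 1) / (n:ℤ) = 0 := by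
              apply Int.ediv_eq_zero_of_lt <;> omega
            have hd := decomp n hn0 a
            rw [hq0, mul_zero, add_zero] at hd
            obtain ⟨r, hr⟩ : ∃ r : Fin n, res n hn0 a = r := ⟨_, rfl⟩
            rw [hr] at hd ⊢
            subst hd
            have h5 : ((r : ℕ) : ℤ) + 1 = ((r : ℕ) : ℤ) + 1 + (n:ℤ) * 0 := by ring
            rw [h5, Fmap_val]
            ring
        rw [hstep]
        have h1 : ∑ r : Fin n, ((u (w.symm r) : ℕ) : ℤ) = ∑ r : Fin n, ((r : ℕ) : ℤ) :=
          Equiv.sum_comp (w.symm.trans u) (fun r => ((r : ℕ) : ℤ))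
        have hfilt : Finset.univ.filter (fun r : Fin n => ((w.symm r : Fin n) : ℕ) < k) = L := by
          ext r
          simp only [Finset.mem_filter, Finset.mem_univ, true_and]
          exact (hmem r).symm
        have h2 : ∑ r : Fin n, (if ((w.symm r : Fin n) : ℕ) < k then (n:ℤ) else 0)
            = (k : ℤ) * n := by
          rw [← Finset.sum_filter, hfilt, Finset.sum_const, hL]
          simp [mul_comm]
        have h3 : ∀ r : Fin n, ((u (w.symm r) : ℕ) : ℤ) + 1
            + (if ((w.symm r : Fin n) : ℕ) < k then (n:ℤ) else 0) - ((r:ℤ) + 1)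
            = (((u (w.symm r) : ℕ) : ℤ) - ((r : ℕ) : ℤ))
              + (if ((w.symm r : Fin n) : ℕ) < k then (n:ℤ) else 0) := by
          intro r; ring
        rw [Finset.sum_congr rfl (fun r _ => h3 r), Finset.sum_add_distrib,
          Finset.sum_sub_distrib, h1, h2]
        ring
    · -- Lambda condition
      intro i
      have h0 : ((i : ℕ) : ℤ) + 1 = ((i : ℕ) : ℤ) + 1 + (n:ℤ)*0 := by ring
      rw [h0, Fmap_val]
      have hun : ((u (w.symm i) : Fin n) : ℕ) < n := (u (w.symm i)).isLt
      rw [hmem i]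
      by_cases h : ((w.symm i : Fin n) : ℕ) < k
      · simp only [if_pos h]
        constructor
        · intro _; exact h
        · intro _; push_cast; omega
      · simp only [if_neg h]
        constructor
        · intro hc
          exfalso
          have : ((u (w.symm i) : ℕ) : ℤ) < n := by exact_mod_cast hun
          omega
        · intro hc; exact absurd hc h
    · -- rel
      intro i
      have h0 : ((w i : ℕ) : ℤ) + 1 = ((w i : ℕ) : ℤ) + 1 + (n:ℤ)*0 := by ring
      rw [h0, Fmap_val, Equiv.symm_apply_apply]
      ring
    · -- uniqueness of f
      rintro f' ⟨⟨⟨_, hper', _, _⟩, _⟩, hrel'⟩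
      funext x
      have dx := decomp n hn0 x
      set r := res n hn0 x with hr
      set q := (x-1)/(n:ℤ) with hq
      have hbase : f' ((r : ℤ) + 1) = ((u (w.symm r) : ℕ) : ℤ) + 1
          + (if ((w.symm r : Fin n) : ℕ) < k then (n:ℤ) else 0) := by
        have := hrel' (w.symm r)
        rwa [Equiv.apply_symm_apply] at this
      rw [dx, Fmap_val, ext_periodic n f' hper' q ((r:ℤ)+1), hbase]
  · -- backward direction
    intro f hf hLam
    obtain ⟨⟨hinj, _⟩, hper, hbd, _⟩ := hf
    have hrange : ∀ i : Fin n,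
        0 ≤ f (((w i : ℕ) : ℤ) + 1) - 1 - (if (i : ℕ) < k then (n:ℤ) else 0) ∧
        f (((w i : ℕ) : ℤ) + 1) - 1 - (if (i : ℕ) < k then (n:ℤ) else 0) < n := by
      intro i
      have hb := hbd (((w i : ℕ) : ℤ) + 1)
      have hL1 := hLam (w i)
      rw [hmemw i] at hL1
      have hwn : ((w i : Fin n) : ℕ) < n := (w i).isLt
      by_cases h : (i : ℕ) < k
      · have := hL1.mpr h
        simp only [if_pos h]
        omega
      · have : ¬ ((n:ℤ) < f (((w i : ℕ) : ℤ) + 1)) := fun hc => h (hL1.mp hc)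
        simp only [if_neg h]
        omega
    set u0 : Fin n → Fin n := fun i =>
      ⟨(f (((w i : ℕ) : ℤ) + 1) - 1 - (if (i : ℕ) < k then (n:ℤ) else 0)).toNat, by
        have := hrange i; omega⟩ with hu0
    have hval : ∀ i : Fin n, ((u0 i : Fin n) : ℕ) =
        (f (((w i : ℕ) : ℤ) + 1) - 1 - (if (i : ℕ) < k then (n:ℤ) else 0)).toNat := by
      intro i; rfl
    have hvalZ : ∀ i : Fin n, ((u0 i : ℕ) : ℤ) =
        f (((w i : ℕ) : ℤ) + 1) - 1 - (if (i : ℕ) < k then (n:ℤ) else 0) := by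
      intro i
      rw [hval i]
      have := hrange i
      omega
    have hvalZlt : ∀ i : Fin n, (i : ℕ) < k →
        ((u0 i : ℕ) : ℤ) = f (((w i : ℕ) : ℤ) + 1) - 1 - n := by
      intro i h
      rw [hvalZ i, if_pos h]
    have hvalZge : ∀ i : Fin n, ¬ ((i : ℕ) < k) →
        ((u0 i : ℕ) : ℤ) = f (((w i : ℕ) : ℤ) + 1) - 1 := by
      intro i h
      rw [hvalZ i, if_neg h]
      ring
    have hinj0 : Function.Injective u0 := by
      intro i j hij
      have hwlt : ∀ m : Fin n, ((w m : Fin n) : ℕ) < n := fun m => (w m).isLt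
      by_cases h1 : (i : ℕ) < k <;> by_cases h2 : (j : ℕ) < k
      · have e1 := hvalZlt i h1
        have e2 := hvalZlt j h2
        rw [hij] at e1
        have : f (((w i : ℕ) : ℤ) + 1) = f (((w j : ℕ) : ℤ) + 1) := by omega
        have := hinj this
        have : w i = w j := by
          apply Fin.ext
          exact_mod_cast (by omega : ((w i : ℕ) : ℤ) = ((w j : ℕ) : ℤ))
        exact w.injective this
      · exfalso
        have e1 := hvalZlt i h1
        have e2 := hvalZge j h2
        rw [hij] at e1
        have hfe : f (((w i : ℕ) : ℤ) + 1) = f (((w j : ℕ) : ℤ) + 1) + n := by omega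
        have hp := hper (((w j : ℕ) : ℤ) + 1)
        rw [← hp] at hfe
        have := hinj hfe
        have hi := hwlt i
        have hj := hwlt j
        omega
      · exfalso
        have e1 := hvalZge i h1
        have e2 := hvalZlt j h2
        rw [hij] at e1
        have hfe : f (((w j : ℕ) : ℤ) + 1) = f (((w i : ℕ) : ℤ) + 1) + n := by omega
        have hp := hper (((w i : ℕ) : ℤ) + 1)
        rw [← hp] at hfe
        have := hinj hfe
        have hi := hwlt i
        have hj := hwlt j
        omega
      · have e1 := hvalZge i h1
        have e2 := hvalZge j h2
        rw [hij] at e1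
        have : f (((w i : ℕ) : ℤ) + 1) = f (((w j : ℕ) : ℤ) + 1) := by omega
        have := hinj this
        have : w i = w j := by
          apply Fin.ext
          exact_mod_cast (by omega : ((w i : ℕ) : ℤ) = ((w j : ℕ) : ℤ))
        exact w.injective this
    let u : Equiv.Perm (Fin n) := Equiv.ofBijective u0 (Finite.injective_iff_bijective.mp hinj0)
    have huapp : ∀ i : Fin n, u i = u0 i := fun i => rfl
    have hrelu : rel n k w u f := by
      intro i
      rw [huapp i]
      by_cases h : (i : ℕ) < k
      · rw [if_pos h]
        have := hvalZlt i h
        omega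
      · rw [if_neg h]
        have := hvalZge i h
        omega
    refine ⟨u, ⟨⟨?_, ?_, ?_⟩, hrelu⟩, ?_⟩
    · intro i hik
      have hv := hvalZlt i hik
      have hb := hbd (((w i : ℕ) : ℤ) + 1)
      rw [Fin.le_def, huapp i]
      omega
    · intro j hjk
      have hv := hvalZge j (not_lt.mpr hjk)
      have hb := hbd (((w j : ℕ) : ℤ) + 1)
      rw [Fin.le_def, huapp j]
      omega
    · intro i j hij hcase _
      rcases hcase with h | h
      · exact hw.1 i j hij h
      · exact hw.2 i j hij h
    · rintro u' ⟨_, hrel'⟩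
      apply Equiv.ext
      intro i
      apply Fin.ext
      have e1 := hrel' i
      have e2 := hrelu i
      rw [e1] at e2
      by_cases h : (i : ℕ) < k
      · rw [if_pos h] at e2
        omega
      · rw [if_neg h] at e2
        omega
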